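/- Fix a time t and N agents. Let A(t) and A(t+1) be N×N doubly stochastic matrices, C > 0, α_t > 0, γ_t > 0. Suppose μ_{i,t}, λ_{i,t+1}, μ_{i,t+1}, z_{i,t} ∈ ℝⁿ satisfy λ_{i,t+1} = [ μ_{i,t} + α_t ( z_{i,t} − γ_t μ_{i,t} ) ]₊, μ_{i,t+1} = Σ_{j=1}^N a_{ij}(t+1) λ_{j,t+1}, ‖z_{i,t}‖ ≤ C and γ_t ‖μ_{i,t}‖ ≤ C for all i, and (1/N) Σ_{i=1}^N z_{i,t} = Σ_{i=1}^N g_{i,t}(x_{i,t}), where x_{i,t} ∈ Ω_i ⊆ ℝ^{d_i} and g_{i,t} : ℝ^{d_i} → ℝⁿ. Set λ̄_t = (1/N) Σ_{i=1}^N μ_{i,t} and define L_t(x, λ) = Σ_{i=1}^N f_{i,t}(x_i) + λᵀ Σ_{i=1}^N g_{i,t}(x_i) − (γ_t/2)‖λ‖². Then for every λ ∈ ℝⁿ with λ ≥ 0 componentwise, writing x_t = (x_{1,t},…,x_{N,t}): L_t(x_t, λ) − L_t(x_t, λ̄_t) ≤ (1/(2Nα_t)) Σ_{i=1}^N ( ‖μ_{i,t}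 − λ‖² − ‖μ_{i,t+1} − λ‖² ) + (2C/N) Σ_{i=1}^N ‖μ_{i,t} − λ̄_t‖ + (α_t/(2N)) Σ_{i=1}^N ( 2C² + 2γ_t² ‖μ_{i,t}‖² ). -/

import Mathlib

open Finset
open scoped RealInnerProductSpace

private lemma cs_wsum {N : ℕ} (w r : Fin N → ℝ) (hw : ∀ j, 0 ≤ w j)
    (hw1 : ∑ j, w j = 1) :
    (∑ j, w j * r j) ^ 2 ≤ ∑ j, w j * r j ^ 2 := by
  have h := Finset.sum_mul_sq_le_sq_mul_sq Finset.univ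
      (fun j => Real.sqrt (w j)) (fun j => Real.sqrt (w j) * r j)
  have e1 : ∀ j, Real.sqrt (w j) * (Real.sqrt (w j) * r j) = w j * r j := by
    intro j; rw [← mul_assoc, Real.mul_self_sqrt (hw j)]
  have e2 : ∀ j : Fin N, Real.sqrt (w j) ^ 2 = w j := fun j => Real.sq_sqrt (hw j)
  have e3 : ∀ j, (Real.sqrt (w j) * r j) ^ 2 = w j * r j ^ 2 := by
    intro j; rw [mul_pow, e2]
  calc (∑ j, w j * r j) ^ 2
      = (∑ j, Real.sqrt (w j) * (Real.sqrt (w j) * r j)) ^ 2 := by simp_rw [e1]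
    _ ≤ (∑ j, Real.sqrt (w j) ^ 2) * ∑ j, (Real.sqrt (w j) * r j) ^ 2 := h
    _ = ∑ j, w j * r j ^ 2 := by simp_rw [e2, e3, hw1, one_mul]

private lemma proj_norm_sq_le {n : ℕ} (a p lam : EuclideanSpace ℝ (Fin n))
    (hp : ∀ k, p k = max (a k) 0) (hl : ∀ k, 0 ≤ lam k) :
    ‖p - lam‖ ^ 2 ≤ ‖a - lam‖ ^ 2 := by
  rw [EuclideanSpace.norm_eq, EuclideanSpace.norm_eq,
    Real.sq_sqrt (by positivity), Real.sq_sqrt (by positivity)]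
  apply Finset.sum_le_sum
  intro k _
  have hpk : (p - lam) k = max (a k) 0 - lam k := by
    simp [hp k]
  have hak : (a - lam) k = a k - lam k := by simp
  rw [hpk, hak, Real.norm_eq_abs, Real.norm_eq_abs, sq_abs, sq_abs]
  rcases le_or_gt 0 (a k) with h | h
  · rw [max_eq_left h]
  · rw [max_eq_right h.le]; nlinarith [hl k]

private lemma mix_norm_sq {N n : ℕ} (w : Fin N → ℝ) (hw : ∀ j, 0 ≤ w j)
    (hw1 : ∑ j, w j = 1) (v : Fin N → EuclideanSpace ℝ (Fin n))
    (lam : EuclideanSpace ℝ (Fin n)) :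
    ‖(∑ j, w j • v j) - lam‖ ^ 2 ≤ ∑ j, w j * ‖v j - lam‖ ^ 2 := by
  have e : (∑ j, w j • v j) - lam = ∑ j, w j • (v j - lam) := by
    simp [smul_sub, Finset.sum_sub_distrib, ← Finset.sum_smul, hw1]
  rw [e]
  have h1 : ‖∑ j, w j • (v j - lam)‖ ≤ ∑ j, w j * ‖v j - lam‖ := by
    refine (norm_sum_le _ _).trans_eq ?_
    refine Finset.sum_congr rfl fun j _ => ?_
    rw [norm_smul, Real.norm_eq_abs, abs_of_nonneg (hw j)]
  calc ‖∑ j, w j • (v j - lam)‖ ^ 2 ≤ (∑ j, w j * ‖v j - lam‖) ^ 2 := by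
        apply pow_le_pow_left₀ (norm_nonneg _) h1
    _ ≤ ∑ j, w j * ‖v j - lam‖ ^ 2 := cs_wsum _ _ hw hw1

private lemma concave_step {n : ℕ} (γ : ℝ) (hγ : 0 ≤ γ)
    (G v lam : EuclideanSpace ℝ (Fin n)) :
    (⟪lam, G⟫ - γ / 2 * ‖lam‖ ^ 2) - (⟪v, G⟫ - γ / 2 * ‖v‖ ^ 2) ≤
      ⟪G - γ • v, lam - v⟫ := by
  have h1 : ⟪G - γ • v, lam - v⟫
      = ⟪lam, G⟫ - ⟪v, G⟫ - γ * ⟪lam, v⟫ + γ * ‖v‖ ^ 2 := by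
    simp only [inner_sub_left, inner_sub_right, real_inner_smul_left]
    rw [real_inner_self_eq_norm_sq]
    rw [real_inner_comm G lam, real_inner_comm G v, real_inner_comm v lam]
    ring
  have h2 : ‖lam - v‖ ^ 2 = ‖lam‖ ^ 2 - 2 * ⟪lam, v⟫ + ‖v‖ ^ 2 :=
    norm_sub_sq_real lam v
  have h3 : 0 ≤ γ * ‖lam - v‖ ^ 2 := mul_nonneg hγ (sq_nonneg _)
  rw [h1]
  nlinarith [h2, h3]

private lemma step_ineq {n : ℕ} (α C γ : ℝ) (hα : 0 < α) (hC : 0 < C) (hγ : 0 ≤ γ)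
    (μi zi lamn lam : EuclideanSpace ℝ (Fin n))
    (hln : ∀ k, lamn k = max (μi k + α * (zi k - γ * μi k)) 0)
    (hz : ‖zi‖ ≤ C) (hμ : γ * ‖μi‖ ≤ C) (hl : ∀ k, 0 ≤ lam k) :
    ⟪zi - γ • μi, lam - μi⟫ ≤
      (2 * α)⁻¹ * (‖μi - lam‖ ^ 2 - ‖lamn - lam‖ ^ 2)
        + α / 2 * (2 * C ^ 2 + 2 * γ ^ 2 * ‖μi‖ ^ 2) := by
  set w : EuclideanSpace ℝ (Fin n) := zi - γ • μi with hw
  have ha : ∀ k, (μi + α • w) k = μi k + α * (zi k - γ * μi k) := by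
    intro k
    simp [hw, PiLp.add_apply, PiLp.smul_apply, PiLp.sub_apply, smul_eq_mul]
  have h1 : ‖lamn - lam‖ ^ 2 ≤ ‖(μi + α • w) - lam‖ ^ 2 :=
    proj_norm_sq_le _ _ _ (fun k => by rw [hln k, ha k]) hl
  have h2 : (μi + α • w) - lam = (μi - lam) + α • w := by abel
  have h3 : ‖(μi - lam) + α • w‖ ^ 2
      = ‖μi - lam‖ ^ 2 + 2 * (α * ⟪μi - lam, w⟫) + α ^ 2 * ‖w‖ ^ 2 := by
    rw [norm_add_sq_real, real_inner_smul_right, norm_smul, Real.norm_eq_abs,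
      abs_of_pos hα]
    ring
  have h4 : ⟪μi - lam, w⟫ = - ⟪w, lam - μi⟫ := by
    rw [real_inner_comm, show μi - lam = -(lam - μi) by abel, inner_neg_right]
  have hwn : ‖w‖ ≤ ‖zi‖ + γ * ‖μi‖ := by
    calc ‖w‖ ≤ ‖zi‖ + ‖γ • μi‖ := norm_sub_le _ _
      _ = ‖zi‖ + γ * ‖μi‖ := by
          rw [norm_smul, Real.norm_eq_abs, abs_of_nonneg hγ]
  have hwbd : ‖w‖ ^ 2 ≤ 2 * C ^ 2 + 2 * γ ^ 2 * ‖μi‖ ^ 2 := by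
    nlinarith [norm_nonneg w, norm_nonneg zi, mul_nonneg hγ (norm_nonneg μi),
      sq_nonneg (‖zi‖ - γ * ‖μi‖), hz, hμ, hC.le]
  rw [h2, h3, h4] at h1
  have h6 : 2 * α * ⟪w, lam - μi⟫ ≤
      (‖μi - lam‖ ^ 2 - ‖lamn - lam‖ ^ 2)
        + α ^ 2 * (2 * C ^ 2 + 2 * γ ^ 2 * ‖μi‖ ^ 2) := by
    nlinarith [mul_le_mul_of_nonneg_left hwbd (sq_nonneg α)]
  have h8 : ⟪w, lam - μi⟫ = (2 * α)⁻¹ * (2 * α * ⟪w, lam - μi⟫) := by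
    field_simp
  rw [h8]
  calc (2 * α)⁻¹ * (2 * α * ⟪w, lam - μi⟫)
      ≤ (2 * α)⁻¹ * ((‖μi - lam‖ ^ 2 - ‖lamn - lam‖ ^ 2)
          + α ^ 2 * (2 * C ^ 2 + 2 * γ ^ 2 * ‖μi‖ ^ 2)) := by
        apply mul_le_mul_of_nonneg_left h6 (by positivity)
    _ = (2 * α)⁻¹ * (‖μi - lam‖ ^ 2 - ‖lamn - lam‖ ^ 2)
        + α / 2 * (2 * C ^ 2 + 2 * γ ^ 2 * ‖μi‖ ^ 2) := by
        field_simp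

/-- One-step dual inequality for the regularized Lagrangian
`L_t(x, λ) = ∑_i f_{i,t}(x_i) + λᵀ ∑_i g_{i,t}(x_i) − (γ_t/2)‖λ‖²`: with the dual update
`λ_{i,t+1} = [μ_{i,t} + α_t(z_{i,t} − γ_t μ_{i,t})]₊`, `μ_{i,t+1} = ∑_j a_{ij}(t+1) λ_{j,t+1}`,
`‖z_{i,t}‖ ≤ C`, `γ_t‖μ_{i,t}‖ ≤ C` and `(1/N)∑_i z_{i,t} = ∑_i g_{i,t}(x_{i,t})`, for every
`λ ≥ 0` the difference `L_t(x_t, λ) − L_t(x_t, λ̄_t)` is bounded by the stated three terms. -/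
theorem stmt_9 (N n : ℕ) (hN : 0 < N)
    (d : Fin N → ℕ)
    (Ω : ∀ i : Fin N, Set (EuclideanSpace ℝ (Fin (d i))))
    (C α γ : ℝ) (hC : 0 < C) (hα : 0 < α) (hγ : 0 < γ)
    (A' : Matrix (Fin N) (Fin N) ℝ)
    (hA'_nonneg : ∀ i j, 0 ≤ A' i j)
    (hA'_row : ∀ i, ∑ j, A' i j = 1)
    (hA'_col : ∀ j, ∑ i, A' i j = 1)
    (f : ∀ i : Fin N, EuclideanSpace ℝ (Fin (d i)) → ℝ)
    (g : ∀ i : Fin N, EuclideanSpace ℝ (Fin (d i)) → EuclideanSpace ℝ (Fin n))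
    (x : ∀ i : Fin N, EuclideanSpace ℝ (Fin (d i)))
    (hx : ∀ i, x i ∈ Ω i)
    (μ lamnext μnext z : Fin N → EuclideanSpace ℝ (Fin n))
    (hlamnext : ∀ i (k : Fin n),
      lamnext i k = max (μ i k + α * (z i k - γ * μ i k)) 0)
    (hμnext : ∀ i, μnext i = ∑ j, A' i j • lamnext j)
    (hz_bd : ∀ i, ‖z i‖ ≤ C)
    (hμ_bd : ∀ i, γ * ‖μ i‖ ≤ C)
    (hz_avg : (N : ℝ)⁻¹ • ∑ i, z i = ∑ i, g i (x i)) :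
    ∀ lam : EuclideanSpace ℝ (Fin n), (∀ k : Fin n, 0 ≤ lam k) →
      ((∑ i, f i (x i)) + (inner ℝ lam (∑ i, g i (x i)) : ℝ) - γ / 2 * ‖lam‖ ^ 2)
        - ((∑ i, f i (x i)) + (inner ℝ ((N : ℝ)⁻¹ • ∑ i, μ i) (∑ i, g i (x i)) : ℝ)
          - γ / 2 * ‖(N : ℝ)⁻¹ • ∑ i, μ i‖ ^ 2) ≤
      1 / (2 * N * α) * ∑ i, (‖μ i - lam‖ ^ 2 - ‖μnext i - lam‖ ^ 2)
      + 2 * C / N * ∑ i, ‖μ i - (N : ℝ)⁻¹ • ∑ j, μ j‖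
      + α / (2 * N) * ∑ i, (2 * C ^ 2 + 2 * γ ^ 2 * ‖μ i‖ ^ 2) := by
  intro lam hlam
  have hNne : (N : ℝ) ≠ 0 := Nat.cast_ne_zero.mpr hN.ne'
  have hNpos : (0:ℝ) < N := Nat.cast_pos.mpr hN
  set G : EuclideanSpace ℝ (Fin n) := ∑ i, g i (x i) with hGdef
  set lb : EuclideanSpace ℝ (Fin n) := (N : ℝ)⁻¹ • ∑ i, μ i with hlb
  have hG : G = (N : ℝ)⁻¹ • ∑ i, z i := hz_avg.symm
  -- Step A : per-agent dual step inequality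
  have stepA : ∀ i : Fin N, ⟪z i - γ • μ i, lam - μ i⟫ ≤
      (2 * α)⁻¹ * (‖μ i - lam‖ ^ 2 - ‖lamnext i - lam‖ ^ 2)
        + α / 2 * (2 * C ^ 2 + 2 * γ ^ 2 * ‖μ i‖ ^ 2) := fun i =>
    step_ineq α C γ hα hC hγ.le (μ i) (z i) (lamnext i) lam (hlamnext i)
      (hz_bd i) (hμ_bd i) hlam
  -- Step C : consensus contraction
  have stepC : ∑ i, ‖μnext i - lam‖ ^ 2 ≤ ∑ i, ‖lamnext i - lam‖ ^ 2 := by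
    calc ∑ i, ‖μnext i - lam‖ ^ 2
        ≤ ∑ i, ∑ j, A' i j * ‖lamnext j - lam‖ ^ 2 := by
          refine Finset.sum_le_sum fun i _ => ?_
          rw [hμnext i]
          exact mix_norm_sq (A' i) (hA'_nonneg i) (hA'_row i) lamnext lam
      _ = ∑ j, ‖lamnext j - lam‖ ^ 2 := by
          rw [Finset.sum_comm]
          refine Finset.sum_congr rfl fun j _ => ?_
          rw [← Finset.sum_mul, hA'_col j, one_mul]
  -- ‖G‖ ≤ C
  have hGnorm : ‖G‖ ≤ C := by
    rw [hG, norm_smul, Real.norm_eq_abs, abs_of_pos (by positivity : (0:ℝ) < (N:ℝ)⁻¹)]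
    calc (N:ℝ)⁻¹ * ‖∑ i, z i‖ ≤ (N:ℝ)⁻¹ * ∑ i, ‖z i‖ :=
          mul_le_mul_of_nonneg_left (norm_sum_le _ _) (by positivity)
      _ ≤ (N:ℝ)⁻¹ * ∑ _i : Fin N, C :=
          mul_le_mul_of_nonneg_left (Finset.sum_le_sum fun i _ => hz_bd i) (by positivity)
      _ = C := by
          rw [Finset.sum_const, Finset.card_univ, Fintype.card_fin, nsmul_eq_mul]
          field_simp
  -- Step B
  have stepB : ∀ i : Fin N, ⟪G - z i, lb - μ i⟫ ≤ 2 * C * ‖μ i - lb‖ := by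
    intro i
    calc ⟪G - z i, lb - μ i⟫ ≤ ‖G - z i‖ * ‖lb - μ i‖ := real_inner_le_norm _ _
      _ ≤ (2 * C) * ‖lb - μ i‖ := by
          apply mul_le_mul_of_nonneg_right _ (norm_nonneg _)
          calc ‖G - z i‖ ≤ ‖G‖ + ‖z i‖ := norm_sub_le _ _
            _ ≤ 2 * C := by linarith [hz_bd i]
      _ = 2 * C * ‖μ i - lb‖ := by rw [norm_sub_rev]
  -- zero-sum identity
  have hzero : ∑ i, (G - z i) = 0 := by
    have hNG : (N : ℝ) • G = ∑ i, z i := by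
      rw [hG, smul_smul, mul_inv_cancel₀ hNne, one_smul]
    rw [Finset.sum_sub_distrib, Finset.sum_const, Finset.card_univ, Fintype.card_fin,
      ← Nat.cast_smul_eq_nsmul ℝ, hNG, sub_self]
  -- splitting identity
  have split : ∑ i, ⟪G - γ • μ i, lam - μ i⟫
      = ∑ i, ⟪z i - γ • μ i, lam - μ i⟫ + ∑ i, ⟪G - z i, lb - μ i⟫ := by
    have e1 : ∀ i : Fin N, ⟪G - γ • μ i, lam - μ i⟫
        = ⟪z i - γ • μ i, lam - μ i⟫ + ⟪G - z i, lam - μ i⟫ := by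
      intro i; rw [← inner_add_left]; congr 1; abel
    have e2 : ∀ i : Fin N, ⟪G - z i, lam - μ i⟫
        = ⟪G - z i, lam - lb⟫ + ⟪G - z i, lb - μ i⟫ := by
      intro i; rw [← inner_add_right]; congr 1; abel
    have e3 : ∑ i, ⟪G - z i, lam - lb⟫ = 0 := by
      rw [← sum_inner, hzero, inner_zero_left]
    simp_rw [e1, e2]
    rw [Finset.sum_add_distrib, Finset.sum_add_distrib, e3]
    ring
  -- Jensen for the norm of the average
  have jensen : ‖lb‖ ^ 2 ≤ (N:ℝ)⁻¹ * ∑ i, ‖μ i‖ ^ 2 := by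
    have hw1 : ∑ _j : Fin N, (N:ℝ)⁻¹ = 1 := by
      rw [Finset.sum_const, Finset.card_univ, Fintype.card_fin, nsmul_eq_mul]
      field_simp
    have h := mix_norm_sq (fun _ : Fin N => (N:ℝ)⁻¹) (fun _ => by positivity) hw1 μ 0
    simp only [sub_zero] at h
    calc ‖lb‖ ^ 2 = ‖∑ j, (N:ℝ)⁻¹ • μ j‖ ^ 2 := by rw [hlb, Finset.smul_sum]
      _ ≤ ∑ j, (N:ℝ)⁻¹ * ‖μ j‖ ^ 2 := h
      _ = (N:ℝ)⁻¹ * ∑ i, ‖μ i‖ ^ 2 := by rw [Finset.mul_sum]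
  have hinnerlb : ⟪lb, G⟫ = (N:ℝ)⁻¹ * ∑ i, ⟪μ i, G⟫ := by
    rw [hlb, real_inner_smul_left, sum_inner]
  -- main concavity chain
  have main : (⟪lam, G⟫ - γ / 2 * ‖lam‖ ^ 2) - (⟪lb, G⟫ - γ / 2 * ‖lb‖ ^ 2)
      ≤ (N:ℝ)⁻¹ * ∑ i, ⟪G - γ • μ i, lam - μ i⟫ := by
    have hsum : ∑ i, ((⟪lam, G⟫ - γ / 2 * ‖lam‖ ^ 2) - (⟪μ i, G⟫ - γ / 2 * ‖μ i‖ ^ 2))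
        ≤ ∑ i, ⟪G - γ • μ i, lam - μ i⟫ :=
      Finset.sum_le_sum fun i _ => concave_step γ hγ.le G (μ i) lam
    have expand : ∑ i, ((⟪lam, G⟫ - γ / 2 * ‖lam‖ ^ 2) - (⟪μ i, G⟫ - γ / 2 * ‖μ i‖ ^ 2))
        = (N:ℝ) * (⟪lam, G⟫ - γ / 2 * ‖lam‖ ^ 2) - ∑ i, ⟪μ i, G⟫
          + γ / 2 * ∑ i, ‖μ i‖ ^ 2 := by
      rw [Finset.sum_sub_distrib, Finset.sum_const, Finset.card_univ,
        Fintype.card_fin, nsmul_eq_mul, Finset.sum_sub_distrib, ← Finset.mul_sum]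
      ring
    have m1 : γ / 2 * ‖lb‖ ^ 2 ≤ γ / 2 * ((N:ℝ)⁻¹ * ∑ i, ‖μ i‖ ^ 2) :=
      mul_le_mul_of_nonneg_left jensen (by positivity)
    have m3 : (⟪lam, G⟫ - γ / 2 * ‖lam‖ ^ 2) - (N:ℝ)⁻¹ * ∑ i, ⟪μ i, G⟫
        + γ / 2 * ((N:ℝ)⁻¹ * ∑ i, ‖μ i‖ ^ 2)
        = (N:ℝ)⁻¹ * ((N:ℝ) * (⟪lam, G⟫ - γ / 2 * ‖lam‖ ^ 2) - ∑ i, ⟪μ i, G⟫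
            + γ / 2 * ∑ i, ‖μ i‖ ^ 2) := by
      field_simp
    have m4 : (N:ℝ)⁻¹ * ((N:ℝ) * (⟪lam, G⟫ - γ / 2 * ‖lam‖ ^ 2) - ∑ i, ⟪μ i, G⟫
          + γ / 2 * ∑ i, ‖μ i‖ ^ 2)
        ≤ (N:ℝ)⁻¹ * ∑ i, ⟪G - γ • μ i, lam - μ i⟫ :=
      mul_le_mul_of_nonneg_left (by linarith [hsum, expand]) (by positivity)
    rw [hinnerlb]
    linarith [m1, m3, m4]
  -- total bound on the inner-product sum
  have total : ∑ i, ⟪G - γ • μ i, lam - μ i⟫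
      ≤ (2 * α)⁻¹ * ∑ i, (‖μ i - lam‖ ^ 2 - ‖μnext i - lam‖ ^ 2)
        + 2 * C * ∑ i, ‖μ i - lb‖
        + α / 2 * ∑ i, (2 * C ^ 2 + 2 * γ ^ 2 * ‖μ i‖ ^ 2) := by
    have tA : ∑ i, ⟪z i - γ • μ i, lam - μ i⟫
        ≤ (2 * α)⁻¹ * ∑ i, (‖μ i - lam‖ ^ 2 - ‖lamnext i - lam‖ ^ 2)
          + α / 2 * ∑ i, (2 * C ^ 2 + 2 * γ ^ 2 * ‖μ i‖ ^ 2) := by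
      rw [Finset.mul_sum, Finset.mul_sum, ← Finset.sum_add_distrib]
      exact Finset.sum_le_sum fun i _ => stepA i
    have tB : ∑ i, ⟪G - z i, lb - μ i⟫ ≤ 2 * C * ∑ i, ‖μ i - lb‖ := by
      rw [Finset.mul_sum]
      exact Finset.sum_le_sum fun i _ => stepB i
    have tC : (2 * α)⁻¹ * ∑ i, (‖μ i - lam‖ ^ 2 - ‖lamnext i - lam‖ ^ 2)
        ≤ (2 * α)⁻¹ * ∑ i, (‖μ i - lam‖ ^ 2 - ‖μnext i - lam‖ ^ 2) := by
      apply mul_le_mul_of_nonneg_left _ (by positivity)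
      rw [Finset.sum_sub_distrib, Finset.sum_sub_distrib]
      linarith [stepC]
    rw [split]
    linarith [tA, tB, tC]
  -- put everything together
  have final : (⟪lam, G⟫ - γ / 2 * ‖lam‖ ^ 2) - (⟪lb, G⟫ - γ / 2 * ‖lb‖ ^ 2)
      ≤ (N:ℝ)⁻¹ * ((2 * α)⁻¹ * ∑ i, (‖μ i - lam‖ ^ 2 - ‖μnext i - lam‖ ^ 2)
        + 2 * C * ∑ i, ‖μ i - lb‖
        + α / 2 * ∑ i, (2 * C ^ 2 + 2 * γ ^ 2 * ‖μ i‖ ^ 2)) :=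
    main.trans (mul_le_mul_of_nonneg_left total (by positivity))
  have rhs_eq : (N:ℝ)⁻¹ * ((2 * α)⁻¹ * ∑ i, (‖μ i - lam‖ ^ 2 - ‖μnext i - lam‖ ^ 2)
        + 2 * C * ∑ i, ‖μ i - lb‖
        + α / 2 * ∑ i, (2 * C ^ 2 + 2 * γ ^ 2 * ‖μ i‖ ^ 2))
      = 1 / (2 * N * α) * ∑ i, (‖μ i - lam‖ ^ 2 - ‖μnext i - lam‖ ^ 2)
        + 2 * C / N * ∑ i, ‖μ i - lb‖
        + α / (2 * N) * ∑ i, (2 * C ^ 2 + 2 * γ ^ 2 * ‖μ i‖ ^ 2) := by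
    field_simp
  rw [rhs_eq] at final
  linarith [final]
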